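/- The vector polynomials p_n^{(a,b),1}(t) := P_n^{(a,b)}(2t−1)·(1,1)ᵀ and p_n^{(a,b),2}(t) := t·P_{n−1}^{(a,b+2)}(2t−1)·(1,−1)ᵀ (n ≥ 1) are mutually orthogonal in the inner product ⟨f,g⟩ = ∫₀¹ f(t)ᵀ g(t) (1−t)^a t^b dt: any two distinct members of the combined family are orthogonal. -/

import Mathlib

open MeasureTheory intervalIntegral Finset Polynomial

noncomputable def gbinom (α : ℝ) (k : ℕ) : ℝ :=
  (∏ i ∈ Finset.range k, (α - i)) / k.factorial

noncomputable def jacobiP (a b : ℝ) (n : ℕ) (x : ℝ) : ℝ :=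
  ∑ s ∈ Finset.range (n + 1),
    gbinom (n + a) (n - s) * gbinom (n + b) s * ((x - 1) / 2) ^ s * ((x + 1) / 2) ^ (n - s)

lemma betaIntegrable {p q : ℝ} (hp : -1 < p) (hq : -1 < q) :
    IntervalIntegrable (fun t : ℝ => t ^ p * (1 - t) ^ q) volume 0 1 := by
  apply IntervalIntegrable.trans (b := (1/2 : ℝ))
  · apply (intervalIntegrable_rpow' hp).mul_continuousOn
    intro x hx
    have hx1 : (1:ℝ) - x ≠ 0 := by
      rw [Set.uIcc_of_le (by norm_num)] at hx
      have := hx.2; intro h; nlinarith [hx.1]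
    exact ((Real.continuousAt_rpow_const _ _ (Or.inl hx1)).comp
      ((continuous_const.sub continuous_id).continuousAt)).continuousWithinAt
  · have h2 : IntervalIntegrable (fun t : ℝ => (1 - t) ^ q) volume (1/2) 1 := by
      have := (intervalIntegrable_rpow' hq (a := 0) (b := 1/2)).comp_sub_left 1
      norm_num at this
      exact this.symm
    apply h2.continuousOn_mul
    intro x hx
    have hx0 : x ≠ 0 := by
      rw [Set.uIcc_of_le (by norm_num)] at hx
      have := hx.1; intro h; rw [h] at this; norm_num at this
    exact (Real.continuousAt_rpow_const _ _ (Or.inl hx0)).continuousWithinAt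

lemma betaValue {p q : ℝ} (hp : -1 < p) (hq : -1 < q) :
    ∫ t in (0:ℝ)..1, t ^ p * (1 - t) ^ q
      = Real.Gamma (p+1) * Real.Gamma (q+1) / Real.Gamma (p+q+2) := by
  have hp' : 0 < ((p:ℂ)+1).re := by simp; linarith
  have hq' : 0 < ((q:ℂ)+1).re := by simp; linarith
  have h1 := Complex.Gamma_mul_Gamma_eq_betaIntegral hp' hq'
  have h2 : Complex.betaIntegral ((p:ℂ)+1) ((q:ℂ)+1)
      = ((∫ t in (0:ℝ)..1, t ^ p * (1 - t) ^ q : ℝ) : ℂ) := by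
    rw [Complex.betaIntegral, ← intervalIntegral.integral_ofReal]
    apply intervalIntegral.integral_congr_ae
    filter_upwards with t ht
    rw [Set.uIoc_of_le (by norm_num : (0:ℝ) ≤ 1)] at ht
    have ht0 : (0:ℝ) ≤ t := ht.1.le
    have ht1 : (0:ℝ) ≤ 1 - t := by linarith [ht.2]
    rw [add_sub_cancel_right, add_sub_cancel_right,
      show ((1:ℂ) - (t:ℂ)) = (((1 - t : ℝ)) : ℂ) by push_cast; ring,
      ← Complex.ofReal_cpow ht0, ← Complex.ofReal_cpow ht1, ← Complex.ofReal_mul]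
  rw [h2] at h1
  have h3 : (p:ℂ)+1+((q:ℂ)+1) = ((p+q+2 : ℝ) : ℂ) := by push_cast; ring
  rw [h3, show ((p:ℂ)+1) = ((p+1:ℝ):ℂ) by push_cast; ring,
    show ((q:ℂ)+1) = ((q+1:ℝ):ℂ) by push_cast; ring,
    Complex.Gamma_ofReal, Complex.Gamma_ofReal, Complex.Gamma_ofReal,
    ← Complex.ofReal_mul, ← Complex.ofReal_mul] at h1
  have h4 := Complex.ofReal_inj.mp h1
  have h5 : Real.Gamma (p+q+2) ≠ 0 := (Real.Gamma_pos_of_pos (by linarith)).ne'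
  field_simp
  linarith [h4]


lemma myGamma_add_nat (x : ℝ) (hx : 0 < x) (k : ℕ) :
    Real.Gamma (x + k) = (∏ i ∈ Finset.range k, (x + i)) * Real.Gamma x := by
  induction k with
  | zero => simp
  | succ k ih =>
    have h1 : x + ((k:ℕ)+1 : ℕ) = (x + k) + 1 := by push_cast; ring
    rw [h1, Real.Gamma_add_one (by positivity), ih, Finset.prod_range_succ]
    push_cast; ring

lemma alt_sum_poly : ∀ (n : ℕ) (p : Polynomial ℝ), p.natDegree < n →
    ∑ s ∈ Finset.range (n+1), (-1:ℝ)^s * (n.choose s) * p.eval (s:ℝ) = 0 := by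
  intro n
  induction n with
  | zero => intro p hp; omega
  | succ n ih =>
    intro p hp
    set q : Polynomial ℝ := p - p.comp (X + C 1) with hq
    have hqe : ∀ s : ℕ, q.eval (s:ℝ) = p.eval (s:ℝ) - p.eval ((s:ℝ)+1) := by
      intro s; simp [hq, eval_comp]
    have key : ∑ s ∈ Finset.range (n+2), (-1:ℝ)^s * ((n+1).choose s) * p.eval (s:ℝ)
        = ∑ s ∈ Finset.range (n+1), (-1:ℝ)^s * (n.choose s) * q.eval (s:ℝ) := by
      rw [Finset.sum_range_succ' _ (n+1)]
      simp only [Nat.cast_add, Nat.cast_one]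
      have h1 : ∀ s, ((n+1).choose (s+1) : ℝ) = (n.choose s : ℝ) + (n.choose (s+1) : ℝ) := by
        intro s; rw [Nat.choose_succ_succ]; push_cast; ring
      have h2 : ∑ s ∈ Finset.range (n+1),
          (-1:ℝ)^(s+1) * ((n.choose s : ℝ) + (n.choose (s+1) : ℝ)) * p.eval ((s:ℝ)+1)
          = (∑ s ∈ Finset.range (n+1), (-1:ℝ)^(s+1) * (n.choose s : ℝ) * p.eval ((s:ℝ)+1))
          + ∑ s ∈ Finset.range (n+1), (-1:ℝ)^(s+1) * (n.choose (s+1) : ℝ) * p.eval ((s:ℝ)+1) := by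
        rw [← Finset.sum_add_distrib]; apply Finset.sum_congr rfl; intros; ring
      have h3 : ∑ s ∈ Finset.range (n+1), (-1:ℝ)^(s+1) * (n.choose (s+1) : ℝ) * p.eval ((s:ℝ)+1)
          = ∑ s ∈ Finset.range (n+2), (-1:ℝ)^s * (n.choose s : ℝ) * p.eval (s:ℝ)
            - (-1:ℝ)^0 * (n.choose 0 : ℝ) * p.eval ((0:ℕ):ℝ) := by
        rw [Finset.sum_range_succ' (fun s => (-1:ℝ)^s * (n.choose s : ℝ) * p.eval (s:ℝ)) (n+1)]
        push_cast; ring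
      have h4 : ∑ s ∈ Finset.range (n+2), (-1:ℝ)^s * (n.choose s : ℝ) * p.eval (s:ℝ)
          = ∑ s ∈ Finset.range (n+1), (-1:ℝ)^s * (n.choose s : ℝ) * p.eval (s:ℝ) := by
        rw [Finset.sum_range_succ, Nat.choose_succ_self]; simp
      simp only [h1]
      rw [h2, h3, h4]
      simp only [hqe]
      have h5 : ∑ x ∈ Finset.range (n+1), (-1:ℝ)^x * (n.choose x : ℝ) * (p.eval (x:ℝ) - p.eval ((x:ℝ)+1))
          = (∑ x ∈ Finset.range (n+1), (-1:ℝ)^x * (n.choose x : ℝ) * p.eval (x:ℝ))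
          - ∑ x ∈ Finset.range (n+1), (-1:ℝ)^x * (n.choose x : ℝ) * p.eval ((x:ℝ)+1) := by
        rw [← Finset.sum_sub_distrib]; apply Finset.sum_congr rfl; intros; ring
      have h6 : ∑ s ∈ Finset.range (n+1), (-1:ℝ)^(s+1) * (n.choose s : ℝ) * p.eval ((s:ℝ)+1)
          = - ∑ s ∈ Finset.range (n+1), (-1:ℝ)^s * (n.choose s : ℝ) * p.eval ((s:ℝ)+1) := by
        rw [← Finset.sum_neg_distrib]; apply Finset.sum_congr rfl; intros; ring
      rw [h5, h6]
      simp
      push_cast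
      ring
    rw [key]
    by_cases hq0 : q = 0
    · simp [hq0]
    · apply ih
      have hp0 : p.natDegree ≠ 0 := by
        intro h0
        obtain ⟨c, rfl⟩ := Polynomial.natDegree_eq_zero.mp h0
        simp [hq] at hq0
      have hpne : p ≠ 0 := fun h => hp0 (by simp [h])
      have hcompdeg : (p.comp (X + C 1)).natDegree = p.natDegree := by
        rw [natDegree_comp, natDegree_X_add_C, mul_one]
      have hcomplc : (p.comp (X + C 1)).leadingCoeff = p.leadingCoeff := by
        rw [leadingCoeff_comp (by rw [natDegree_X_add_C]; norm_num),
          (monic_X_add_C (1:ℝ)).leadingCoeff, one_pow, mul_one]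
      have hcompne : p.comp (X + C 1) ≠ 0 := by
        intro h
        apply hpne
        have h2 := hcomplc
        rw [h, leadingCoeff_zero] at h2
        exact leadingCoeff_eq_zero.mp h2.symm
      have hdd : (p.comp (X + C 1)).degree = p.degree := by
        rw [degree_eq_natDegree hcompne, degree_eq_natDegree hpne, hcompdeg]
      have hdeg : (p.comp (X + C 1) - p).degree < p.degree := by
        rw [← hdd]; exact degree_sub_lt hdd hcompne hcomplc
      have : q.degree < p.degree := by
        have : q = -(p.comp (X + C 1) - p) := by rw [hq]; ring
        rw [this, degree_neg]; exact hdeg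
      have h5 : q.natDegree < p.natDegree :=
        Polynomial.natDegree_lt_natDegree hq0 this
      omega

lemma prod_left_reindex (b : ℝ) (n : ℕ) : ∀ s ≤ n,
    ∏ i ∈ Finset.range s, ((n:ℝ) + b - i) = ∏ i ∈ Finset.Ico (n+1-s) (n+1), (b + i) := by
  intro s
  induction s with
  | zero => simp
  | succ s ih =>
    intro hs
    rw [Finset.prod_range_succ, ih (by omega)]
    rw [show n+1-(s+1) = n-s by omega,
      Finset.prod_eq_prod_Ico_succ_bot (by omega : n-s < n+1),
      show n-s+1 = n+1-s by omega]
    have : (b + ((n-s : ℕ) : ℝ)) = (n:ℝ) + b - s := by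
      rw [Nat.cast_sub (by omega)]; ring
    rw [this]; ring

lemma prod_ident (b : ℝ) (n s f : ℕ) (hs : s ≤ n) (hf : f ≤ n) :
    (∏ i ∈ Finset.Ico (n+1-s) (n+1), (b + (i:ℝ))) *
      ∏ i ∈ Finset.Ico (f+1) (f+1+(n-s)), (b + (i:ℝ))
    = (∏ i ∈ Finset.Ico (f+1) (n+1), (b + (i:ℝ))) *
      ∏ i ∈ Finset.Ico (n+1-s) (n+1-s+f), (b + (i:ℝ)) := by
  rcases le_or_gt s f with h | h
  · rw [← Finset.prod_Ico_consecutive (fun i => (b + (i:ℝ))) (show f+1 ≤ n+1 by omega)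
      (show n+1 ≤ f+1+(n-s) by omega),
      ← Finset.prod_Ico_consecutive (fun i => (b + (i:ℝ))) (show n+1-s ≤ n+1 by omega)
      (show n+1 ≤ n+1-s+f by omega),
      show f+1+(n-s) = n+1-s+f by omega]
    ring
  · rw [← Finset.prod_Ico_consecutive (fun i => (b + (i:ℝ))) (show f+1 ≤ f+1+(n-s) by omega)
      (show f+1+(n-s) ≤ n+1 by omega),
      ← Finset.prod_Ico_consecutive (fun i => (b + (i:ℝ))) (show n+1-s ≤ n+1-s+f by omega)
      (show n+1-s+f ≤ n+1 by omega),
      show f+1+(n-s) = n+1-s+f by omega]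
    ring

lemma key_sum (a b : ℝ) (ha : -1 < a) (hb : -1 < b) (e f n : ℕ) (h : e + f < n) :
    ∑ s ∈ Finset.range (n+1), gbinom ((n:ℝ)+a) (n-s) * gbinom ((n:ℝ)+b) s * (-1:ℝ)^s *
      (Real.Gamma (a+e+s+1) * Real.Gamma (b+f+(n:ℝ)-s+1)) = 0 := by
  classical
  set R : Polynomial ℝ := (∏ i ∈ Finset.range e, (Polynomial.X + Polynomial.C (a+1+i))) *
    ∏ j ∈ Finset.range f, (Polynomial.C (b+(n:ℝ)+1+j) - Polynomial.X) with hR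
  have hRdeg : R.natDegree < n := by
    have h1 : (∏ i ∈ Finset.range e, (Polynomial.X + Polynomial.C (a+1+(i:ℝ)))).natDegree = e := by
      rw [Polynomial.natDegree_prod _ _ (fun i _ => Polynomial.X_add_C_ne_zero _),
        Finset.sum_congr rfl (fun i _ => Polynomial.natDegree_X_add_C _)]
      simp
    have hcx : ∀ c : ℝ, Polynomial.C c - Polynomial.X = -(Polynomial.X - Polynomial.C c) := by
      intro c; ring
    have h2 : (∏ j ∈ Finset.range f,
        (Polynomial.C (b+(n:ℝ)+1+j) - Polynomial.X)).natDegree = f := by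
      rw [Polynomial.natDegree_prod _ _ (fun j _ => by
        rw [hcx]; exact neg_ne_zero.mpr (Polynomial.X_sub_C_ne_zero _))]
      have : ∀ j ∈ Finset.range f,
          (Polynomial.C (b+(n:ℝ)+1+j) - Polynomial.X).natDegree = 1 := by
        intro j _; rw [hcx, Polynomial.natDegree_neg, Polynomial.natDegree_X_sub_C]
      rw [Finset.sum_congr rfl this]; simp
    have hne1 : (∏ i ∈ Finset.range e, (Polynomial.X + Polynomial.C (a+1+(i:ℝ)))) ≠ 0 :=
      Finset.prod_ne_zero_iff.mpr (fun i _ => Polynomial.X_add_C_ne_zero _)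
    have hne2 : (∏ j ∈ Finset.range f,
        (Polynomial.C (b+(n:ℝ)+1+j) - Polynomial.X)) ≠ 0 :=
      Finset.prod_ne_zero_iff.mpr (fun j _ => by
        rw [hcx]; exact neg_ne_zero.mpr (Polynomial.X_sub_C_ne_zero _))
    rw [hR, Polynomial.natDegree_mul hne1 hne2, h1, h2]
    omega
  have hconst : ∀ s ∈ Finset.range (n+1),
      gbinom ((n:ℝ)+a) (n-s) * gbinom ((n:ℝ)+b) s * (-1:ℝ)^s *
        (Real.Gamma (a+e+s+1) * Real.Gamma (b+f+(n:ℝ)-s+1))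
      = (Real.Gamma (a+(n:ℝ)+1) * Real.Gamma (b+(f:ℝ)+1) *
          (∏ i ∈ Finset.Ico (f+1) (n+1), (b + (i:ℝ))) / n.factorial) *
        ((-1:ℝ)^s * (n.choose s : ℝ) * R.eval (s:ℝ)) := by
    intro s hs
    rw [Finset.mem_range] at hs
    have hsn : s ≤ n := by omega
    have hs0 : (0:ℝ) ≤ (s:ℝ) := Nat.cast_nonneg s
    have hf0 : (0:ℝ) ≤ (f:ℝ) := Nat.cast_nonneg f
    -- Gamma(a+e+s+1) = E1 * Gamma(a+s+1)
    have hGA : Real.Gamma (a+(e:ℝ)+(s:ℝ)+1)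
        = (∏ i ∈ Finset.range e, (a+1+(i:ℝ)+(s:ℝ))) * Real.Gamma (a+(s:ℝ)+1) := by
      have h0 := myGamma_add_nat (a+(s:ℝ)+1) (by linarith) e
      rw [show a+(s:ℝ)+1+(e:ℝ) = a+(e:ℝ)+(s:ℝ)+1 by ring] at h0
      rw [h0]
      congr 1
      apply Finset.prod_congr rfl; intros; ring
    -- PA * Gamma(a+s+1) = Gamma(a+n+1)
    have hGamA2 : (∏ i ∈ Finset.range (n-s), ((n:ℝ)+a-(i:ℝ))) * Real.Gamma (a+(s:ℝ)+1)
        = Real.Gamma (a+(n:ℝ)+1) := by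
      have h0 := myGamma_add_nat (a+(s:ℝ)+1) (by linarith) (n-s)
      rw [show a+(s:ℝ)+1+((n-s : ℕ):ℝ) = a+(n:ℝ)+1 by
        rw [Nat.cast_sub hsn]; ring] at h0
      rw [h0]
      congr 1
      rw [← Finset.prod_range_reflect (fun i => a+(s:ℝ)+1+(i:ℝ)) (n-s)]
      apply Finset.prod_congr rfl
      intro i hi
      rw [Finset.mem_range] at hi
      have h1 : n - s - 1 - i = n - (s + 1 + i) := by omega
      rw [h1, Nat.cast_sub (by omega : s + 1 + i ≤ n)]
      push_cast
      ring
    -- Gamma(b+f+n-s+1) = E2 * Gamma(b+f+1)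
    have hGB : Real.Gamma (b+(f:ℝ)+(n:ℝ)-(s:ℝ)+1)
        = (∏ i ∈ Finset.range (n-s), (b+(f:ℝ)+1+(i:ℝ))) * Real.Gamma (b+(f:ℝ)+1) := by
      have h0 := myGamma_add_nat (b+(f:ℝ)+1) (by linarith) (n-s)
      rw [show b+(f:ℝ)+1+((n-s : ℕ):ℝ) = b+(f:ℝ)+(n:ℝ)-(s:ℝ)+1 by
        rw [Nat.cast_sub hsn]; ring] at h0
      rw [h0]
    -- PB * E2 = Cst * E3
    have hPP : (∏ i ∈ Finset.range s, ((n:ℝ)+b-(i:ℝ))) *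
        (∏ i ∈ Finset.range (n-s), (b+(f:ℝ)+1+(i:ℝ)))
        = (∏ i ∈ Finset.Ico (f+1) (n+1), (b + (i:ℝ))) *
          ∏ j ∈ Finset.range f, (b+(n:ℝ)+1+(j:ℝ)-(s:ℝ)) := by
      rw [prod_left_reindex b n s hsn]
      have hstep2 : (∏ i ∈ Finset.range (n-s), (b+(f:ℝ)+1+(i:ℝ)))
          = ∏ i ∈ Finset.Ico (f+1) (f+1+(n-s)), (b + (i:ℝ)) := by
        rw [Finset.prod_Ico_eq_prod_range]
        rw [show f+1+(n-s)-(f+1) = n-s by omega]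
        apply Finset.prod_congr rfl; intros; push_cast; ring
      rw [hstep2, prod_ident b n s f hsn (by omega)]
      congr 1
      rw [Finset.prod_Ico_eq_prod_range]
      rw [show n+1-s+f-(n+1-s) = f by omega]
      apply Finset.prod_congr rfl
      intro j _
      rw [show n+1-s+j = n+1+j-s by omega, Nat.cast_sub (by omega : s ≤ n+1+j)]
      push_cast
      ring
    have hReval : R.eval (s:ℝ)
        = (∏ i ∈ Finset.range e, (a+1+(i:ℝ)+(s:ℝ))) *
          ∏ j ∈ Finset.range f, (b+(n:ℝ)+1+(j:ℝ)-(s:ℝ)) := by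
      rw [hR, Polynomial.eval_mul, Polynomial.eval_prod, Polynomial.eval_prod]
      simp only [Polynomial.eval_add, Polynomial.eval_sub, Polynomial.eval_X, Polynomial.eval_C]
      congr 1 <;> (apply Finset.prod_congr rfl; intros; ring)
    have hfac : ((n.choose s : ℝ)) * (s.factorial : ℝ) * ((n-s).factorial : ℝ)
        = (n.factorial : ℝ) := by
      rw [← Nat.cast_mul, ← Nat.cast_mul, Nat.choose_mul_factorial_mul_factorial hsn]
    rw [gbinom, gbinom, hGA, hGB, hReval, ← hfac]
    have hfs : ((s.factorial : ℝ)) ≠ 0 := Nat.cast_ne_zero.mpr (Nat.factorial_ne_zero s)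
    have hfns : (((n-s).factorial : ℝ)) ≠ 0 := Nat.cast_ne_zero.mpr (Nat.factorial_ne_zero (n-s))
    have hch : ((n.choose s : ℝ)) ≠ 0 :=
      Nat.cast_ne_zero.mpr (Nat.choose_pos hsn).ne'
    field_simp
    linear_combination ((∏ i ∈ Finset.range e, (a+1+(i:ℝ)+(s:ℝ))) *
      (∏ i ∈ Finset.range s, ((n:ℝ)+b-(i:ℝ))) *
      (∏ i ∈ Finset.range (n-s), (b+(f:ℝ)+1+(i:ℝ))) * Real.Gamma (b+(f:ℝ)+1)) * hGamA2 +
      ((∏ i ∈ Finset.range e, (a+1+(i:ℝ)+(s:ℝ))) *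
        Real.Gamma (a+(n:ℝ)+1) * Real.Gamma (b+(f:ℝ)+1)) * hPP
  rw [Finset.sum_congr rfl hconst, ← Finset.mul_sum, alt_sum_poly n R hRdeg, mul_zero]

lemma weight_integrable (a b : ℝ) (ha : -1 < a) (hb : -1 < b) :
    IntervalIntegrable (fun t : ℝ => (1-t)^a * t^b) MeasureTheory.volume 0 1 := by
  have h := betaIntegrable hb ha
  have heq : (fun t : ℝ => t^b*(1-t)^a) = fun t : ℝ => (1-t)^a * t^b :=
    funext fun t => mul_comm _ _
  rwa [heq] at h

lemma cont_weight_integrable (a b : ℝ) (ha : -1 < a) (hb : -1 < b) {φ : ℝ → ℝ}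
    (hφ : Continuous φ) :
    IntervalIntegrable (fun t : ℝ => φ t * ((1-t)^a * t^b)) MeasureTheory.volume 0 1 :=
  (weight_integrable a b ha hb).continuousOn_mul hφ.continuousOn

lemma ae_ne_one : ∀ᵐ t : ℝ, t ≠ (1:ℝ) := by
  rw [MeasureTheory.ae_iff]
  simpa using Real.volume_singleton

lemma mono_val (a b : ℝ) (ha : -1 < a) (hb : -1 < b) (E F : ℕ) :
    ∫ t in (0:ℝ)..1, (t-1)^E * t^F * ((1-t)^a * t^b)
      = (-1:ℝ)^E *
        (Real.Gamma (b+(F:ℝ)+1) * Real.Gamma (a+(E:ℝ)+1) / Real.Gamma (b+(F:ℝ)+(a+(E:ℝ))+2)) := by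
  have hF0 : (0:ℝ) ≤ (F:ℝ) := Nat.cast_nonneg F
  have hE0 : (0:ℝ) ≤ (E:ℝ) := Nat.cast_nonneg E
  have hbF : -1 < b + (F:ℝ) := by linarith
  have haE : -1 < a + (E:ℝ) := by linarith
  have hcong : ∫ t in (0:ℝ)..1, (t-1)^E * t^F * ((1-t)^a * t^b)
      = ∫ t in (0:ℝ)..1, (-1:ℝ)^E * (t^(b+(F:ℝ)) * (1-t)^(a+(E:ℝ))) := by
    apply intervalIntegral.integral_congr_ae
    filter_upwards [ae_ne_one] with t ht1 hmem
    rw [Set.uIoc_of_le (by norm_num : (0:ℝ) ≤ 1)] at hmem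
    have ht0 : 0 < t := hmem.1
    have ht2 : 0 < 1 - t := by
      rcases lt_or_eq_of_le hmem.2 with h | h
      · linarith
      · exact absurd h ht1
    have e1 : t^(b+(F:ℝ)) = t^b * t^(F:ℕ) := by
      rw [Real.rpow_add ht0, Real.rpow_natCast]
    have e2 : (1-t)^(a+(E:ℝ)) = (1-t)^a * (1-t)^(E:ℕ) := by
      rw [Real.rpow_add ht2, Real.rpow_natCast]
    have e3 : (t-1:ℝ)^E = (-1:ℝ)^E * (1-t)^E := by
      rw [show (t-1:ℝ) = -(1-t) by ring, neg_pow]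
    rw [e1, e2, e3]
    ring
  rw [hcong, intervalIntegral.integral_const_mul, betaValue hbF haE]

lemma moment (a b : ℝ) (ha : -1 < a) (hb : -1 < b) (e f n : ℕ) (h : e + f < n) :
    ∫ t in (0:ℝ)..1, (t-1)^e * t^f * jacobiP a b n (2*t-1) * ((1-t)^a * t^b) = 0 := by
  have hrep : ∀ t : ℝ, (t-1)^e * t^f * jacobiP a b n (2*t-1) * ((1-t)^a * t^b)
      = ∑ s ∈ Finset.range (n+1), gbinom ((n:ℝ)+a) (n-s) * gbinom ((n:ℝ)+b) s *
          ((t-1)^(e+s) * t^(f+(n-s)) * ((1-t)^a * t^b)) := by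
    intro t
    rw [jacobiP, Finset.mul_sum, Finset.sum_mul]
    apply Finset.sum_congr rfl
    intro s _
    rw [show (2*t-1-1)/2 = t-1 by ring, show (2*t-1+1)/2 = t by ring, pow_add, pow_add]
    ring
  simp only [hrep]
  rw [intervalIntegral.integral_finset_sum]
  · have hD : (0:ℝ) < a+b+(e:ℝ)+(f:ℝ)+(n:ℝ)+2 := by
      have := Nat.cast_nonneg (α:=ℝ) e
      have := Nat.cast_nonneg (α:=ℝ) f
      have := Nat.cast_nonneg (α:=ℝ) n
      linarith
    have hterm : ∀ s ∈ Finset.range (n+1),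
        (∫ t in (0:ℝ)..1, gbinom ((n:ℝ)+a) (n-s) * gbinom ((n:ℝ)+b) s *
          ((t-1)^(e+s) * t^(f+(n-s)) * ((1-t)^a * t^b)))
        = ((-1:ℝ)^e * (Real.Gamma (a+b+(e:ℝ)+(f:ℝ)+(n:ℝ)+2))⁻¹) *
          (gbinom ((n:ℝ)+a) (n-s) * gbinom ((n:ℝ)+b) s * (-1:ℝ)^s *
            (Real.Gamma (a+(e:ℝ)+(s:ℝ)+1) * Real.Gamma (b+(f:ℝ)+(n:ℝ)-(s:ℝ)+1))) := by
      intro s hs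
      rw [Finset.mem_range] at hs
      have hsn : s ≤ n := by omega
      rw [intervalIntegral.integral_const_mul, mono_val a b ha hb (e+s) (f+(n-s))]
      rw [show b+((f+(n-s):ℕ):ℝ)+1 = b+(f:ℝ)+(n:ℝ)-(s:ℝ)+1 by
          push_cast [Nat.cast_sub hsn]; ring,
        show a+((e+s:ℕ):ℝ)+1 = a+(e:ℝ)+(s:ℝ)+1 by push_cast; ring,
        show b+((f+(n-s):ℕ):ℝ)+(a+((e+s:ℕ):ℝ))+2 = a+b+(e:ℝ)+(f:ℝ)+(n:ℝ)+2 by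
          push_cast [Nat.cast_sub hsn]; ring,
        pow_add]
      field_simp
    rw [Finset.sum_congr rfl hterm, ← Finset.mul_sum, key_sum a b ha hb e f n h, mul_zero]
  · intro s _
    apply IntervalIntegrable.const_mul
    exact cont_weight_integrable a b ha hb (by fun_prop)

lemma jacobi_inner (a b : ℝ) (ha : -1 < a) (hb : -1 < b) {k j : ℕ} (hkj : k < j) :
    ∫ t in (0:ℝ)..1, jacobiP a b k (2*t-1) * jacobiP a b j (2*t-1) * ((1-t)^a * t^b) = 0 := by
  have hcont : Continuous (fun t : ℝ => jacobiP a b j (2*t-1)) := by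
    unfold jacobiP
    apply continuous_finset_sum
    intro s _
    fun_prop
  have hrep : ∀ t : ℝ, jacobiP a b k (2*t-1) * jacobiP a b j (2*t-1) * ((1-t)^a * t^b)
      = ∑ s ∈ Finset.range (k+1), gbinom ((k:ℝ)+a) (k-s) * gbinom ((k:ℝ)+b) s *
          ((t-1)^s * t^(k-s) * jacobiP a b j (2*t-1) * ((1-t)^a * t^b)) := by
    intro t
    rw [jacobiP, Finset.sum_mul, Finset.sum_mul]
    apply Finset.sum_congr rfl
    intro s _
    rw [show (2*t-1-1)/2 = t-1 by ring, show (2*t-1+1)/2 = t by ring]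
    ring
  simp only [hrep]
  rw [intervalIntegral.integral_finset_sum]
  · apply Finset.sum_eq_zero
    intro s hs
    rw [Finset.mem_range] at hs
    rw [intervalIntegral.integral_const_mul, moment a b ha hb s (k-s) j (by omega), mul_zero]
  · intro s _
    apply IntervalIntegrable.const_mul
    exact cont_weight_integrable a b ha hb (hφ := by fun_prop)

lemma jacobi_orth (a b : ℝ) (ha : -1 < a) (hb : -1 < b) {k j : ℕ} (hkj : k ≠ j) :
    ∫ t in (0:ℝ)..1, jacobiP a b k (2*t-1) * jacobiP a b j (2*t-1) * ((1-t)^a * t^b) = 0 := by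
  rcases lt_or_gt_of_ne hkj with h | h
  · exact jacobi_inner a b ha hb h
  · have h0 := jacobi_inner a b ha hb h
    have heq : (fun t : ℝ => jacobiP a b k (2*t-1) * jacobiP a b j (2*t-1) * ((1-t)^a * t^b))
        = fun t : ℝ => jacobiP a b j (2*t-1) * jacobiP a b k (2*t-1) * ((1-t)^a * t^b) :=
      funext fun t => by ring
    rw [heq]
    exact h0

/-- `p_n^{(a,b),1}(t) = P_n^{(a,b)}(2t−1)(1,1)ᵀ`. -/
noncomputable def pvec1 (a b : ℝ) (n : ℕ) (t : ℝ) : Fin 2 → ℝ :=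
  ![jacobiP a b n (2 * t - 1), jacobiP a b n (2 * t - 1)]

/-- `p_n^{(a,b),2}(t) = t P_{n−1}^{(a,b+2)}(2t−1)(1,−1)ᵀ`. -/
noncomputable def pvec2 (a b : ℝ) (n : ℕ) (t : ℝ) : Fin 2 → ℝ :=
  ![t * jacobiP a (b + 2) (n - 1) (2 * t - 1), -(t * jacobiP a (b + 2) (n - 1) (2 * t - 1))]

/-- The inner product `⟨f,g⟩ = ∫₀¹ f(t)ᵀ g(t) (1−t)^a t^b dt`. -/
noncomputable def vip (a b : ℝ) (f g : ℝ → Fin 2 → ℝ) : ℝ :=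
  ∫ t in (0 : ℝ)..1, (f t 0 * g t 0 + f t 1 * g t 1) * (1 - t) ^ a * t ^ b

/-- Any two distinct members of the combined family `{p_n^{(a,b),1}} ∪ {p_n^{(a,b),2}}_{n≥1}`
are orthogonal. -/
theorem pvec_orthogonal (a b : ℝ) (ha : -1 < a) (hb : -1 < b) :
    (∀ k j : ℕ, k ≠ j → vip a b (pvec1 a b k) (pvec1 a b j) = 0) ∧
    (∀ k j : ℕ, 1 ≤ k → 1 ≤ j → k ≠ j → vip a b (pvec2 a b k) (pvec2 a b j) = 0) ∧
    (∀ k j : ℕ, 1 ≤ j → vip a b (pvec1 a b k) (pvec2 a b j) = 0) := by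
  refine ⟨?_, ?_, ?_⟩
  · intro k j hkj
    unfold vip pvec1
    simp only [Matrix.cons_val_zero, Matrix.cons_val_one, Matrix.head_cons]
    have key := jacobi_orth a b ha hb hkj
    have hcong : ∫ t in (0:ℝ)..1,
        (jacobiP a b k (2*t-1) * jacobiP a b j (2*t-1)
          + jacobiP a b k (2*t-1) * jacobiP a b j (2*t-1)) * (1-t)^a * t^b
        = ∫ t in (0:ℝ)..1,
          2 * (jacobiP a b k (2*t-1) * jacobiP a b j (2*t-1) * ((1-t)^a * t^b)) := by
      apply intervalIntegral.integral_congr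
      intro t _
      ring
    rw [hcong, intervalIntegral.integral_const_mul, key, mul_zero]
  · intro k j hk hj hkj
    unfold vip pvec2
    simp only [Matrix.cons_val_zero, Matrix.cons_val_one, Matrix.head_cons]
    have hb2 : -1 < b + 2 := by linarith
    have key := jacobi_orth a (b+2) ha hb2 (show k-1 ≠ j-1 by omega)
    have hcong : ∫ t in (0:ℝ)..1,
        (t * jacobiP a (b+2) (k-1) (2*t-1) * (t * jacobiP a (b+2) (j-1) (2*t-1))
          + -(t * jacobiP a (b+2) (k-1) (2*t-1)) * -(t * jacobiP a (b+2) (j-1) (2*t-1)))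
          * (1-t)^a * t^b
        = ∫ t in (0:ℝ)..1,
          2 * (jacobiP a (b+2) (k-1) (2*t-1) * jacobiP a (b+2) (j-1) (2*t-1)
            * ((1-t)^a * t^(b+2))) := by
      apply intervalIntegral.integral_congr_ae
      filter_upwards with t hmem
      rw [Set.uIoc_of_le (by norm_num : (0:ℝ) ≤ 1)] at hmem
      have ht0 : 0 < t := hmem.1
      have h2 : t^(b+2) = t^b * t^(2:ℕ) := by
        rw [show (2:ℝ) = ((2:ℕ):ℝ) by norm_num, Real.rpow_add ht0, Real.rpow_natCast]
      rw [h2]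
      ring
    rw [hcong, intervalIntegral.integral_const_mul, key, mul_zero]
  · intro k j hj
    unfold vip pvec1 pvec2
    simp only [Matrix.cons_val_zero, Matrix.cons_val_one, Matrix.head_cons]
    have hcong : ∫ t in (0:ℝ)..1,
        (jacobiP a b k (2*t-1) * (t * jacobiP a (b+2) (j-1) (2*t-1))
          + jacobiP a b k (2*t-1) * -(t * jacobiP a (b+2) (j-1) (2*t-1))) * (1-t)^a * t^b
        = ∫ t in (0:ℝ)..1, (0:ℝ) := by
      apply intervalIntegral.integral_congr
      intro t _
      ring
    rw [hcong, intervalIntegral.integral_zero]
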